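/- arXiv:1502.06226 — 2 statements merged into one kernel-verified Lean document; each statement's English description precedes it below -/
import Mathlib

section
/- For all objects i, j of C and all integers n > 2, the degree-n component C(i,j)_n of the morphism space C(i,j) is zero. -/
open SimpleGraph

/-- A simple graph equipped with an orientation (a choice of one direction for each
edge) which contains an infinite directed walk. -/
structure OrientedWithRay {V : Type} (G : SimpleGraph V) where
  dir : V → V → Prop
  dir_adj : ∀ {i j : V}, dir i j → G.Adj i j
  total : ∀ {i j : V}, G.Adj i j → dir i j ∨ dir j i
  asymm : ∀ {i j : V}, dir i j → ¬ dir j i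
  ray : ℕ → V
  ray_dir : ∀ n : ℕ, dir (ray n) (ray (n + 1))

variable (k : Type) [Field k] {V : Type} (G : SimpleGraph V)

/-- The morphism space of the free `k`-linear category on the path category of the
doubled quiver `Q` of `G`: paths in `Q` from `i` to `j` are exactly walks in `G`. -/
abbrev PathAlg (i j : V) : Type := G.Walk i j →₀ k

/-- Bilinear composition (concatenation of paths, written diagrammatically). -/
noncomputable def pmul {i j l : V} (x : PathAlg k G i j) (y : PathAlg k G j l) :
    PathAlg k G i l :=
  x.sum fun p a => y.sum fun q b => Finsupp.single (p.append q) (a * b)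

/-- The generating relations: (i) `a ∘ b = 0` for arrows `b : i → j`, `a : j → l` with
`i`, `j`, `l` pairwise distinct; (ii) `a₁ ∘ b₁ = a₂ ∘ b₂` for the two length-2 loops at
`j` through distinct neighbours `a ≠ b`. -/
inductive IsRelGen : ∀ {i j : V}, PathAlg k G i j → Prop
  | rel1 {i j l : V} (h1 : G.Adj i j) (h2 : G.Adj j l) (hij : i ≠ j) (hjl : j ≠ l)
      (hil : i ≠ l) :
      IsRelGen (Finsupp.single (Walk.cons h1 (Walk.cons h2 Walk.nil)) (1 : k))
  | rel2 {j a b : V} (h1 : G.Adj j a) (h2 : G.Adj j b) (hja : j ≠ a) (hjb : j ≠ b)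
      (hab : a ≠ b) :
      IsRelGen (Finsupp.single (Walk.cons h1 (Walk.cons h1.symm Walk.nil)) (1 : k)
        - Finsupp.single (Walk.cons h2 (Walk.cons h2.symm Walk.nil)) (1 : k))

/-- The ideal generated by the relations. -/
noncomputable def CIdeal (i l : V) : Submodule k (PathAlg k G i l) :=
  Submodule.span k
    { z | ∃ (a b : V) (p : G.Walk i a) (r : PathAlg k G a b) (q : G.Walk b l),
        IsRelGen k G r ∧
        z = pmul k G (Finsupp.single p 1) (pmul k G r (Finsupp.single q 1)) }

/-- Morphism spaces of the category `C`. -/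
abbrev CHom (i l : V) := PathAlg k G i l ⧸ CIdeal k G i l

/-- The image in `C` of a path of `Q`. -/
noncomputable def cmk {i l : V} (p : G.Walk i l) : CHom k G i l :=
  Submodule.Quotient.mk (Finsupp.single p 1)

/-- The degree-`n` component `C(i,l)_n`, spanned by (images of) the paths of length `n`. -/
noncomputable def CGradeZ (i l : V) (n : ℤ) : Submodule k (CHom k G i l) :=
  Submodule.span k { x | ∃ p : G.Walk i l, (p.length : ℤ) = n ∧ x = cmk k G p }



lemma pmul_single_single {i j l : V} (p : G.Walk i j) (q : G.Walk j l) (a b : k) :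
    pmul k G (Finsupp.single p a) (Finsupp.single q b)
      = Finsupp.single (p.append q) (a * b) := by
  simp [pmul, Finsupp.sum_single_index]

lemma pmul_sub_single {i j l : V} (x y : PathAlg k G i j) (q : G.Walk j l) (c : k) :
    pmul k G (x - y) (Finsupp.single q c)
      = pmul k G x (Finsupp.single q c) - pmul k G y (Finsupp.single q c) := by
  unfold pmul
  apply Finsupp.sum_sub_index
  intro m b₁ b₂
  simp [Finsupp.sum_single_index, sub_mul, Finsupp.single_sub]

lemma pmul_single_sub {i j l : V} (p : G.Walk i j) (c : k) (x y : PathAlg k G j l) :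
    pmul k G (Finsupp.single p c) (x - y)
      = pmul k G (Finsupp.single p c) x - pmul k G (Finsupp.single p c) y := by
  unfold pmul
  rw [Finsupp.sum_single_index, Finsupp.sum_single_index, Finsupp.sum_single_index]
  · apply Finsupp.sum_sub_index
    intro m b₁ b₂
    simp [mul_sub, Finsupp.single_sub]
  all_goals simp

lemma mem_rel1 {i l a b c : V} (p : G.Walk i a) (h1 : G.Adj a b) (h2 : G.Adj b c)
    (q : G.Walk c l) (hab : a ≠ b) (hbc : b ≠ c) (hac : a ≠ c) :
    Finsupp.single (p.append (Walk.cons h1 (Walk.cons h2 q))) (1 : k)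
      ∈ CIdeal k G i l := by
  apply Submodule.subset_span
  refine ⟨a, c, p, _, q, IsRelGen.rel1 h1 h2 hab hbc hac, ?_⟩
  rw [pmul_single_single, pmul_single_single]
  simp

lemma mem_rel2 {i l j a b : V} (p : G.Walk i j) (h1 : G.Adj j a) (h2 : G.Adj j b)
    (q : G.Walk j l) (hja : j ≠ a) (hjb : j ≠ b) (hab : a ≠ b) :
    Finsupp.single (p.append (Walk.cons h1 (Walk.cons h1.symm q))) (1 : k)
      - Finsupp.single (p.append (Walk.cons h2 (Walk.cons h2.symm q))) (1 : k)
      ∈ CIdeal k G i l := by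
  apply Submodule.subset_span
  refine ⟨j, j, p, _, q, IsRelGen.rel2 h1 h2 hja hjb hab, ?_⟩
  rw [pmul_sub_single, pmul_single_single, pmul_single_single, pmul_single_sub,
    pmul_single_single, pmul_single_single]
  simp

lemma only_two (hconn : G.Connected) (O : OrientedWithRay G) {i x : V}
    (hi : ∀ w, G.Adj i w → w = x) (hx : ∀ w, G.Adj x w → w = i) : False := by
  have hall : ∀ (u v : V), G.Walk u v → (u = i ∨ u = x) → (v = i ∨ v = x) := by
    intro u v w
    induction w with
    | nil => exact id
    | cons h _ ih =>
      intro hu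
      apply ih
      rcases hu with rfl | rfl
      · exact Or.inr (hi _ h)
      · exact Or.inl (hx _ h)
  have hv : ∀ v : V, v = i ∨ v = x := fun v =>
    (hconn.preconnected i v).elim fun w => hall i v w (Or.inl rfl)
  have ne01 : O.ray 0 ≠ O.ray 1 := (O.dir_adj (O.ray_dir 0)).ne
  have ne12 : O.ray 1 ≠ O.ray 2 := (O.dir_adj (O.ray_dir 1)).ne
  have e02 : O.ray 2 = O.ray 0 := by
    rcases hv (O.ray 0) with h0 | h0 <;> rcases hv (O.ray 1) with h1 | h1 <;>
      rcases hv (O.ray 2) with h2 | h2 <;> simp_all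
  exact O.asymm (O.ray_dir 0) (e02 ▸ O.ray_dir 1)

lemma key3 (hconn : G.Connected) (O : OrientedWithRay G) {i x y z l : V}
    (h1 : G.Adj i x) (h2 : G.Adj x y) (h3 : G.Adj y z) (q : G.Walk z l) :
    Finsupp.single (Walk.cons h1 (Walk.cons h2 (Walk.cons h3 q))) (1 : k)
      ∈ CIdeal k G i l := by
  by_cases hiy : i = y
  · subst hiy
    by_cases hxz : x = z
    · subst hxz
      -- walk is i → x → i → x, then q
      by_cases hxw : ∃ w, G.Adj x w ∧ w ≠ i
      · obtain ⟨w, hw, hwi⟩ := hxw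
        have hmem := mem_rel2 k G (Walk.cons h1 Walk.nil) h2 hw q h2.ne hw.ne
          hwi.symm
        simp only [Walk.cons_append, Walk.nil_append] at hmem
        have hp' := mem_rel1 k G (Walk.nil (u := i)) h1 hw (Walk.cons hw.symm q)
          h1.ne hw.ne hwi.symm
        simp only [Walk.nil_append] at hp'
        have hadd := (CIdeal k G i l).add_mem hmem hp'
        rw [sub_add_cancel] at hadd
        exact hadd
      · push_neg at hxw
        by_cases hiw : ∃ w, G.Adj i w ∧ w ≠ x
        · obtain ⟨w, hw, hwx⟩ := hiw
          have hmem := mem_rel2 k G (Walk.nil (u := i)) h1 hw (Walk.cons h3 q)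
            h1.ne hw.ne hwx.symm
          simp only [Walk.nil_append] at hmem
          have hp' := mem_rel1 k G (Walk.cons hw Walk.nil) hw.symm h3 q
            hw.ne' h1.ne hwx
          simp only [Walk.cons_append, Walk.nil_append] at hp'
          have hadd := (CIdeal k G i l).add_mem hmem hp'
          rw [sub_add_cancel] at hadd
          exact hadd
        · push_neg at hiw
          exact (only_two G hconn O hiw hxw).elim
    · -- edges 2,3: x → i → z, pairwise distinct
      have := mem_rel1 k G (Walk.cons h1 Walk.nil) h2 h3 q h2.ne h3.ne hxz
      simpa using this
  · -- edges 1,2: i → x → y, pairwise distinct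
    have := mem_rel1 k G (Walk.nil (u := i)) h1 h2 (Walk.cons h3 q) h1.ne h2.ne hiy
    simpa using this

lemma key (hconn : G.Connected) (O : OrientedWithRay G) {i l : V} (p : G.Walk i l)
    (hp : 3 ≤ p.length) : Finsupp.single p (1 : k) ∈ CIdeal k G i l := by
  match p with
  | .nil => simp at hp
  | .cons h1 .nil => simp at hp
  | .cons h1 (.cons h2 .nil) => simp at hp
  | .cons h1 (.cons h2 (.cons h3 q)) => exact key3 k G hconn O h1 h2 h3 q


/-- STATEMENT 1: For all objects `i, j` of `C` and all integers `n > 2`, the degree-`n`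
component `C(i,j)_n` is zero. -/
theorem statement_1 (k : Type) [Field k] [IsAlgClosed k] {V : Type} (G : SimpleGraph V)
    (hconn : G.Connected) (O : OrientedWithRay G) :
    ∀ (i j : V) (n : ℤ), 2 < n → CGradeZ k G i j n = ⊥ := by
  intro i j n hn
  rw [eq_bot_iff, CGradeZ, Submodule.span_le]
  rintro x ⟨p, hlen, rfl⟩
  have h3 : 3 ≤ p.length := by omega
  simp only [SetLike.mem_coe, Submodule.mem_bot, cmk, Submodule.Quotient.mk_eq_zero]
  exact key k G hconn O p h3
end

section
/- For all distinct vertices i ≠ j of G, the degree-2 component C(i,j)_2 is zero. Moreover, for every vertex i of G, all degree-2 loops a∘b at i (where b : i → j and a : j → i are opposite arrows of Q for some neighbour j of i) are equal and nonzero in C, so C(i,i)_2 is one-dimensional over k. -/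
open SimpleGraph

variable (k : Type) [Field k] {V : Type} (G : SimpleGraph V)

lemma pmul_sub_left {i j l : V} (x y : PathAlg k G i j) (z : PathAlg k G j l) :
    pmul k G (x - y) z = pmul k G x z - pmul k G y z := by
  unfold pmul
  rw [Finsupp.sum_sub_index]
  intro p a₁ a₂
  rw [← Finsupp.sum_sub]
  congr 1
  funext q b
  rw [sub_mul, Finsupp.single_sub]

lemma pmul_sub_right {i j l : V} (x : PathAlg k G i j) (y z : PathAlg k G j l) :
    pmul k G x (y - z) = pmul k G x y - pmul k G x z := by
  unfold pmul
  rw [← Finsupp.sum_sub]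
  congr 1
  funext p a
  rw [Finsupp.sum_sub_index]
  intro q b₁ b₂
  rw [mul_sub, Finsupp.single_sub]

/-- The functional on `PathAlg i i` summing the coefficients of the length-2 walks. -/
noncomputable def phi (i : V) : PathAlg k G i i →ₗ[k] k :=
  Finsupp.lsum k fun w : G.Walk i i =>
    if w.length = 2 then (LinearMap.id : k →ₗ[k] k) else 0

lemma phi_single {i : V} (w : G.Walk i i) (c : k) :
    phi k G i (Finsupp.single w c) = if w.length = 2 then c else 0 := by
  rw [phi, Finsupp.lsum_single]
  split <;> simp

lemma phi_vanish (i : V) : CIdeal k G i i ≤ LinearMap.ker (phi k G i) := by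
  rw [CIdeal, Submodule.span_le]
  rintro z ⟨a, b, p, r, q, hr, rfl⟩
  cases hr with
  | rel1 h1 h2 hij hjl hil =>
    simp only [SetLike.mem_coe, LinearMap.mem_ker]
    rw [pmul_single_single, pmul_single_single, phi_single, if_neg]
    intro h
    simp only [Walk.length_append, Walk.length_cons, Walk.length_nil] at h
    have hp : p.length = 0 := by omega
    have hq : q.length = 0 := by omega
    exact hil ((Walk.eq_of_length_eq_zero hp).symm ▸
      (Walk.eq_of_length_eq_zero hq) ▸ rfl)
  | rel2 h1 h2 hja hjb hab =>
    simp only [SetLike.mem_coe, LinearMap.mem_ker]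
    rw [pmul_sub_left, pmul_sub_right, pmul_single_single, pmul_single_single,
      pmul_single_single, pmul_single_single, map_sub, phi_single, phi_single]
    simp only [Walk.length_append, Walk.length_cons, Walk.length_nil]
    ring_nf

/-- All degree-2 loops at `i` are equal in `C`. -/
lemma loops_eq {i j l : V} (h1 : G.Adj i j) (h2 : G.Adj i l) :
    cmk k G (Walk.cons h1 (Walk.cons h1.symm Walk.nil)) =
      cmk k G (Walk.cons h2 (Walk.cons h2.symm Walk.nil)) := by
  by_cases hjl : j = l
  · subst hjl; rfl
  · rw [cmk, cmk, Submodule.Quotient.eq]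
    apply Submodule.subset_span
    refine ⟨i, i, Walk.nil, _, Walk.nil,
      IsRelGen.rel2 h1 h2 h1.ne h2.ne hjl, ?_⟩
    rw [pmul_sub_left, pmul_sub_right, pmul_single_single, pmul_single_single,
      pmul_single_single, pmul_single_single]
    simp [Walk.append_nil]

lemma loop_ne_zero {i j : V} (h1 : G.Adj i j) :
    cmk k G (Walk.cons h1 (Walk.cons h1.symm Walk.nil)) ≠ 0 := by
  intro h0
  rw [cmk, Submodule.Quotient.mk_eq_zero] at h0
  have := phi_vanish k G i h0
  rw [LinearMap.mem_ker, phi_single] at this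
  simp at this

lemma exists_adj (hconn : G.Connected) (O : OrientedWithRay G) (i : V) :
    ∃ j : V, G.Adj i j := by
  have e : G.Adj (O.ray 0) (O.ray 1) := O.dir_adj (O.ray_dir 0)
  by_cases h : i = O.ray 0
  · exact ⟨O.ray 1, h ▸ e⟩
  · obtain ⟨w⟩ := hconn i (O.ray 0)
    cases w with
    | nil => exact absurd rfl h
    | cons ha _ => exact ⟨_, ha⟩

/-- STATEMENT 3: For distinct `i ≠ j`, `C(i,j)_2 = 0`; all degree-2 loops at a vertex
`i` are equal and nonzero in `C`, and `C(i,i)_2` is one-dimensional. -/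
theorem statement_3 (k : Type) [Field k] [IsAlgClosed k] {V : Type} (G : SimpleGraph V)
    (hconn : G.Connected) (O : OrientedWithRay G) :
    (∀ i j : V, i ≠ j → CGradeZ k G i j 2 = ⊥) ∧
    (∀ (i j l : V) (h1 : G.Adj i j) (h2 : G.Adj i l),
      cmk k G (Walk.cons h1 (Walk.cons h1.symm Walk.nil)) =
        cmk k G (Walk.cons h2 (Walk.cons h2.symm Walk.nil)) ∧
      cmk k G (Walk.cons h1 (Walk.cons h1.symm Walk.nil)) ≠ 0) ∧
    (∀ i : V, Module.finrank k ↥(CGradeZ k G i i 2) = 1) := by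
  refine ⟨?_, fun i j l h1 h2 => ⟨loops_eq k G h1 h2, loop_ne_zero k G h1⟩, ?_⟩
  · intro i j hij
    rw [CGradeZ, Submodule.span_eq_bot]
    rintro x ⟨p, hlen, rfl⟩
    have hlen2 : p.length = 2 := by exact_mod_cast hlen
    cases p with
    | nil => simp at hlen2
    | cons h p' =>
      cases p' with
      | nil => simp at hlen2
      | cons h' p'' =>
        cases p'' with
        | nil =>
          rw [cmk, Submodule.Quotient.mk_eq_zero]
          apply Submodule.subset_span
          refine ⟨i, j, Walk.nil, _, Walk.nil,
            IsRelGen.rel1 h h' h.ne h'.ne hij, ?_⟩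
          rw [pmul_single_single, pmul_single_single]
          simp [Walk.append_nil]
        | cons _ _ => simp at hlen2
  · intro i
    obtain ⟨j, hj⟩ := exists_adj G hconn O i
    have hset : { x | ∃ p : G.Walk i i, (p.length : ℤ) = 2 ∧ x = cmk k G p } =
        {cmk k G (Walk.cons hj (Walk.cons hj.symm Walk.nil))} := by
      ext x
      constructor
      · rintro ⟨p, hlen, rfl⟩
        have hlen2 : p.length = 2 := by exact_mod_cast hlen
        cases p with
        | nil => simp at hlen2
        | cons h p' =>
          cases p' with
          | nil => simp at hlen2
          | cons h' p'' =>
            cases p'' with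
            | nil => exact (loops_eq k G h hj)
            | cons _ _ => simp at hlen2
      · rintro rfl
        exact ⟨Walk.cons hj (Walk.cons hj.symm Walk.nil), by simp, rfl⟩
    rw [CGradeZ, hset]
    exact finrank_span_singleton (loop_ne_zero k G hj)
end
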